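/- Let k be a finite field of characteristic p > 2 and let X be a nonempty type. Then k⟨X⟩ has infinitely many maximal T-spaces; that is, the set of maximal T-spaces of k⟨X⟩ is infinite. -/

import Mathlib

/-- A T-space of the free unital associative algebra `k⟨X⟩`: a `k`-submodule invariant
under every `k`-algebra endomorphism of `k⟨X⟩`. -/
def IsTSpaceF (k X : Type*) [Field k] (V : Submodule k (FreeAlgebra k X)) : Prop :=
  ∀ φ : FreeAlgebra k X →ₐ[k] FreeAlgebra k X, ∀ v ∈ V, φ v ∈ V

/-- The T-space of `k⟨X⟩` generated by a set `S`. -/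
def TSpaceGenF (k X : Type*) [Field k] (S : Set (FreeAlgebra k X)) :
    Submodule k (FreeAlgebra k X) :=
  sInf {V | IsTSpaceF k X V ∧ S ⊆ (V : Set (FreeAlgebra k X))}

/-- A T-ideal of `k⟨X⟩`: a two-sided ideal that is also a T-space. -/
def IsTIdealF (k X : Type*) [Field k] (V : Submodule k (FreeAlgebra k X)) : Prop :=
  IsTSpaceF k X V ∧ ∀ a ∈ V, ∀ r : FreeAlgebra k X, r * a ∈ V ∧ a * r ∈ V

/-- The T-ideal of `k⟨X⟩` generated by a set `S`. -/
def TIdealGenF (k X : Type*) [Field k] (S : Set (FreeAlgebra k X)) :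
    Submodule k (FreeAlgebra k X) :=
  sInf {V | IsTIdealF k X V ∧ S ⊆ (V : Set (FreeAlgebra k X))}

/-- `T⁽²⁾`: the smallest T-ideal of `k⟨X⟩` containing all commutators `ab - ba`. -/
def T2 (k X : Type*) [Field k] : Submodule k (FreeAlgebra k X) :=
  sInf {V | IsTIdealF k X V ∧ ∀ a b : FreeAlgebra k X, a * b - b * a ∈ V}

namespace MaxTSpaceAux

open Polynomial
open scoped Classical

variable {k : Type*} [Field k] [Fintype k]

/-- `w n = X^(q^n) - X`. -/
noncomputable def wpoly (k : Type*) [Field k] [Fintype k] (n : ℕ) : Polynomial k :=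
  X ^ (Fintype.card k ^ n) - X

/-- Frobenius additivity on `k[X]` for exponents `q^j`. -/
lemma add_pow_cardpow (j : ℕ) (a b : Polynomial k) :
    (a + b) ^ (Fintype.card k ^ j) =
      a ^ (Fintype.card k ^ j) + b ^ (Fintype.card k ^ j) := by
  obtain ⟨n0, hp', hcard⟩ := FiniteField.card k (ringChar k)
  haveI := Fact.mk hp'
  simp only [hcard, ← pow_mul]
  exact add_pow_char_pow a b _ _

lemma C_mul_pow_cardpow (j : ℕ) (c : k) (a : Polynomial k) :
    (C c * a) ^ (Fintype.card k ^ j) = C c * a ^ (Fintype.card k ^ j) := by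
  rw [mul_pow, ← map_pow, FiniteField.pow_card_pow]

lemma comp_X_pow_card (j : ℕ) (g : Polynomial k) :
    g.comp ((X : Polynomial k) ^ (Fintype.card k ^ j)) = g ^ (Fintype.card k ^ j) := by
  induction g using Polynomial.induction_on' with
  | add p q hp hq => rw [add_comp, hp, hq, add_pow_cardpow]
  | monomial i c =>
      rw [← C_mul_X_pow_eq_monomial, mul_comp, C_comp, pow_comp, X_comp,
        C_mul_pow_cardpow, ← pow_mul, ← pow_mul, mul_comm i]

/-- Key divisibility: `X^(q^j) - X ∣ g^(q^j) - g` for every `g : k[X]`. -/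
lemma wpoly_dvd (j : ℕ) (g : Polynomial k) :
    wpoly k j ∣ g ^ (Fintype.card k ^ j) - g := by
  rw [← comp_X_pow_card]
  induction g using Polynomial.induction_on' with
  | add p q hp hq =>
      have : (p + q).comp ((X : Polynomial k) ^ (Fintype.card k ^ j)) - (p + q)
          = (p.comp ((X : Polynomial k) ^ (Fintype.card k ^ j)) - p)
            + (q.comp ((X : Polynomial k) ^ (Fintype.card k ^ j)) - q) := by
        rw [add_comp]; ring
      rw [this]; exact dvd_add hp hq
  | monomial i c =>
      rw [← C_mul_X_pow_eq_monomial, mul_comp, C_comp, pow_comp, X_comp, ← mul_sub]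
      exact Dvd.dvd.mul_left
        (sub_dvd_pow_sub_pow ((X : Polynomial k) ^ (Fintype.card k ^ j)) X i) _

lemma wpoly_dvd_card (g : Polynomial k) :
    wpoly k 1 ∣ g ^ Fintype.card k - g := by
  have := wpoly_dvd (k := k) 1 g
  rwa [pow_one] at this

/-- The invariant subspace `Vpoly n = {v : w n ∣ v^q - v}` of `k[X]`. -/
noncomputable def Vpoly (k : Type*) [Field k] [Fintype k] (n : ℕ) :
    Submodule k (Polynomial k) where
  carrier := {v | wpoly k n ∣ v ^ Fintype.card k - v}
  add_mem' := by
    intro a b ha hb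
    have : (a + b) ^ Fintype.card k - (a + b)
        = (a ^ Fintype.card k - a) + (b ^ Fintype.card k - b) := by
      have h := add_pow_cardpow (k := k) 1 a b
      rw [pow_one] at h
      rw [h]; ring
    simpa [Set.mem_setOf_eq, this] using dvd_add ha hb
  zero_mem' := by
    simp only [Set.mem_setOf_eq, zero_pow Fintype.card_ne_zero, sub_zero]
    exact dvd_zero _
  smul_mem' := by
    intro c v hv
    have h := C_mul_pow_cardpow (k := k) 1 c v
    rw [pow_one] at h
    have : (c • v) ^ Fintype.card k - c • v = C c * (v ^ Fintype.card k - v) := by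
      rw [smul_eq_C_mul, h]; ring
    simpa [Set.mem_setOf_eq, this] using Dvd.dvd.mul_left hv (C c)

lemma mem_Vpoly {n : ℕ} {v : Polynomial k} :
    v ∈ Vpoly k n ↔ wpoly k n ∣ v ^ Fintype.card k - v := Iff.rfl

lemma Vpoly_mul_mem {n : ℕ} {a b : Polynomial k}
    (ha : a ∈ Vpoly k n) (hb : b ∈ Vpoly k n) : a * b ∈ Vpoly k n := by
  rw [mem_Vpoly] at ha hb ⊢
  have : (a * b) ^ Fintype.card k - a * b
      = a ^ Fintype.card k * (b ^ Fintype.card k - b) + (a ^ Fintype.card k - a) * b := by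
    rw [mul_pow]; ring
  rw [this]
  exact dvd_add (Dvd.dvd.mul_left hb _) (Dvd.dvd.mul_right ha _)

lemma Vpoly_one_mem {n : ℕ} : (1 : Polynomial k) ∈ Vpoly k n := by
  rw [mem_Vpoly, one_pow, sub_self]
  exact dvd_zero _

lemma Vpoly_pow_mem {n : ℕ} {a : Polynomial k} (ha : a ∈ Vpoly k n) (i : ℕ) :
    a ^ i ∈ Vpoly k n := by
  induction i with
  | zero => simpa using Vpoly_one_mem (k := k)
  | succ i ih => rw [pow_succ]; exact Vpoly_mul_mem ih ha

lemma Vpoly_wmul_mem {n : ℕ} (h : Polynomial k) : wpoly k n * h ∈ Vpoly k n := by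
  rw [mem_Vpoly]
  exact dvd_sub (dvd_pow (dvd_mul_right _ h) Fintype.card_ne_zero) (dvd_mul_right _ h)

lemma w1_dvd_X_pow_sub (i : ℕ) :
    wpoly k 1 ∣ (X : Polynomial k) ^ (Fintype.card k ^ i) - X := by
  induction i with
  | zero => simp
  | succ i ih =>
      have h1 : wpoly k 1 ∣ ((X : Polynomial k) ^ (Fintype.card k ^ i)) ^ Fintype.card k
          - (X : Polynomial k) ^ (Fintype.card k ^ i) :=
        wpoly_dvd_card _
      have hexp : ((X : Polynomial k) ^ (Fintype.card k ^ i)) ^ Fintype.card k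
          = (X : Polynomial k) ^ (Fintype.card k ^ (i + 1)) := by
        rw [← pow_mul, ← pow_succ]
      rw [hexp] at h1
      have : (X : Polynomial k) ^ (Fintype.card k ^ (i + 1)) - X
          = ((X : Polynomial k) ^ (Fintype.card k ^ (i + 1))
              - (X : Polynomial k) ^ (Fintype.card k ^ i))
            + ((X : Polynomial k) ^ (Fintype.card k ^ i) - X) := by ring
      rw [this]
      exact dvd_add h1 ih

/-- The trace polynomial `tr n = ∑_{i<n} X^(q^i)`. -/
noncomputable def trpoly (k : Type*) [Field k] [Fintype k] (n : ℕ) : Polynomial k :=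
  ∑ i ∈ Finset.range n, (X : Polynomial k) ^ (Fintype.card k ^ i)

lemma trpoly_pow_card (n : ℕ) :
    trpoly k n ^ Fintype.card k
      = ∑ i ∈ Finset.range n, (X : Polynomial k) ^ (Fintype.card k ^ (i + 1)) := by
  induction n with
  | zero => simp [trpoly, zero_pow Fintype.card_ne_zero]
  | succ n ih =>
      rw [trpoly, Finset.sum_range_succ, ← trpoly]
      have h := add_pow_cardpow (k := k) 1 (trpoly k n)
        ((X : Polynomial k) ^ (Fintype.card k ^ n))
      rw [pow_one] at h
      rw [h, ih, Finset.sum_range_succ, ← pow_mul, ← pow_succ]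

lemma trpoly_mem (n : ℕ) : trpoly k n ∈ Vpoly k n := by
  rw [mem_Vpoly]
  have : trpoly k n ^ Fintype.card k - trpoly k n
      = ∑ i ∈ Finset.range n,
          ((X : Polynomial k) ^ (Fintype.card k ^ (i + 1))
            - (X : Polynomial k) ^ (Fintype.card k ^ i)) := by
    rw [Finset.sum_sub_distrib, ← trpoly_pow_card, trpoly]
  rw [this, Finset.sum_range_sub (f := fun i => (X : Polynomial k) ^ (Fintype.card k ^ i))]
  simp [wpoly]

lemma w1_dvd_trpoly_sub (n : ℕ) :
    wpoly k 1 ∣ trpoly k n - (n : Polynomial k) * X := by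
  have : trpoly k n - (n : Polynomial k) * X
      = ∑ i ∈ Finset.range n, ((X : Polynomial k) ^ (Fintype.card k ^ i) - X) := by
    rw [Finset.sum_sub_distrib, Finset.sum_const, Finset.card_range, ← trpoly,
      nsmul_eq_mul]
  rw [this]
  exact Finset.dvd_sum fun i _ => w1_dvd_X_pow_sub i

/-- Normalized trace `σ_n`, congruent to `X` mod `w 1` and lying in `Vpoly n`. -/
noncomputable def sigpoly (k : Type*) [Field k] [Fintype k] (n : ℕ) : Polynomial k :=
  C ((n : k)⁻¹) * trpoly k n

lemma sigpoly_mem (n : ℕ) : sigpoly k n ∈ Vpoly k n := by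
  rw [mem_Vpoly]
  have h := C_mul_pow_cardpow (k := k) 1 ((n : k)⁻¹) (trpoly k n)
  rw [pow_one] at h
  have : sigpoly k n ^ Fintype.card k - sigpoly k n
      = C ((n : k)⁻¹) * (trpoly k n ^ Fintype.card k - trpoly k n) := by
    rw [sigpoly, h]; ring
  rw [this]
  exact Dvd.dvd.mul_left (trpoly_mem n) _

lemma w1_dvd_sigpoly_sub_X {n : ℕ} (hn : (n : k) ≠ 0) :
    wpoly k 1 ∣ sigpoly k n - X := by
  have hC : C ((n : k)⁻¹) * ((n : Polynomial k) * X) = X := by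
    rw [← C_eq_natCast, ← mul_assoc, ← C_mul, inv_mul_cancel₀ hn, C_1, one_mul]
  have : sigpoly k n - X = C ((n : k)⁻¹) * (trpoly k n - (n : Polynomial k) * X) := by
    rw [mul_sub, hC, sigpoly]
  rw [this]
  exact Dvd.dvd.mul_left (w1_dvd_trpoly_sub n) _

/-- Periodicity of `X^(q^j)` classes modulo `wpoly k n`. -/
lemma wpoly_period (n a j : ℕ) :
    wpoly k n ∣ (X : Polynomial k) ^ (Fintype.card k ^ (j + a * n))
      - (X : Polynomial k) ^ (Fintype.card k ^ j) := by
  induction a with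
  | zero => simp
  | succ a ih =>
      have h1 : wpoly k n ∣ ((X : Polynomial k) ^ (Fintype.card k ^ (j + a * n)))
            ^ (Fintype.card k ^ n)
          - (X : Polynomial k) ^ (Fintype.card k ^ (j + a * n)) := wpoly_dvd n _
      have hexp : ((X : Polynomial k) ^ (Fintype.card k ^ (j + a * n))) ^ (Fintype.card k ^ n)
          = (X : Polynomial k) ^ (Fintype.card k ^ (j + (a + 1) * n)) := by
        rw [← pow_mul, ← pow_add]
        ring_nf
      rw [hexp] at h1
      have : (X : Polynomial k) ^ (Fintype.card k ^ (j + (a + 1) * n))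
            - (X : Polynomial k) ^ (Fintype.card k ^ j)
          = ((X : Polynomial k) ^ (Fintype.card k ^ (j + (a + 1) * n))
              - (X : Polynomial k) ^ (Fintype.card k ^ (j + a * n)))
            + ((X : Polynomial k) ^ (Fintype.card k ^ (j + a * n))
              - (X : Polynomial k) ^ (Fintype.card k ^ j)) := by ring
      rw [this]
      exact dvd_add h1 ih

/-- If `n, m` are coprime and `1 < n`, the gcd of `w n` and `w m` divides `w 1`. -/
lemma gcd_wpoly_dvd_w1 {n m : ℕ} (hco : Nat.Coprime m n) (hn : 1 < n) :
    EuclideanDomain.gcd (wpoly k n) (wpoly k m) ∣ wpoly k 1 := by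
  classical
  set d := EuclideanDomain.gcd (wpoly k n) (wpoly k m) with hd
  have hdn : d ∣ wpoly k n := EuclideanDomain.gcd_dvd_left _ _
  have hdm : d ∣ wpoly k m := EuclideanDomain.gcd_dvd_right _ _
  obtain ⟨b, -, hb⟩ := Nat.exists_mul_mod_eq_one_of_coprime hco hn
  have h0 := Nat.div_add_mod (m * b) n
  rw [hb] at h0
  obtain ⟨qq, hq⟩ : ∃ qq, m * b / n = qq := ⟨_, rfl⟩
  rw [hq] at h0
  have h1 : d ∣ (X : Polynomial k) ^ (Fintype.card k ^ (0 + b * m))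
      - (X : Polynomial k) ^ (Fintype.card k ^ 0) :=
    dvd_trans hdm (wpoly_period m b 0)
  have h2 : d ∣ (X : Polynomial k) ^ (Fintype.card k ^ (1 + qq * n))
      - (X : Polynomial k) ^ (Fintype.card k ^ 1) :=
    dvd_trans hdn (wpoly_period n qq 1)
  have hexp : 0 + b * m = 1 + qq * n := by
    rw [Nat.zero_add, Nat.mul_comm, ← h0]; ring
  rw [hexp] at h1
  have hdd := dvd_sub h1 h2
  have heq : ((X : Polynomial k) ^ (Fintype.card k ^ (1 + qq * n))
        - (X : Polynomial k) ^ (Fintype.card k ^ 0))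
      - ((X : Polynomial k) ^ (Fintype.card k ^ (1 + qq * n))
        - (X : Polynomial k) ^ (Fintype.card k ^ 1))
      = wpoly k 1 := by
    simp only [pow_zero, pow_one, wpoly]
    ring
  rwa [heq] at hdd

lemma w1_eq_comb {n m : ℕ} (hco : Nat.Coprime m n) (hn : 1 < n) :
    ∃ a b : Polynomial k, wpoly k 1 = a * wpoly k n + b * wpoly k m := by
  classical
  obtain ⟨c, hc⟩ := gcd_wpoly_dvd_w1 (k := k) hco hn
  have hab := EuclideanDomain.gcd_eq_gcd_ab (wpoly k n) (wpoly k m)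
  refine ⟨EuclideanDomain.gcdA (wpoly k n) (wpoly k m) * c,
    EuclideanDomain.gcdB (wpoly k n) (wpoly k m) * c, ?_⟩
  rw [hc, hab]; ring

/-- Pairwise comaximality downstairs: `Vpoly n ⊔ Vpoly m = ⊤`. -/
lemma Vpoly_sup_eq_top {n m : ℕ} (hco : Nat.Coprime m n) (hn1 : 1 < n)
    (hnk : (n : k) ≠ 0) : Vpoly k n ⊔ Vpoly k m = ⊤ := by
  rw [eq_top_iff]
  intro v _
  obtain ⟨a, b, hab⟩ := w1_eq_comb (k := k) hco hn1
  have hpow : ∀ i : ℕ, (X : Polynomial k) ^ i ∈ Vpoly k n ⊔ Vpoly k m := by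
    intro i
    have h1 : sigpoly k n ^ i ∈ Vpoly k n := Vpoly_pow_mem (sigpoly_mem n) i
    obtain ⟨h, hh⟩ := dvd_trans (w1_dvd_sigpoly_sub_X hnk)
      (sub_dvd_pow_sub_pow (sigpoly k n) X i)
    -- hh : sigpoly k n ^ i - X ^ i = wpoly k 1 * h
    refine Submodule.mem_sup.mpr
      ⟨sigpoly k n ^ i - wpoly k n * (a * h), sub_mem h1 (Vpoly_wmul_mem _),
       -(wpoly k m * (b * h)), neg_mem (Vpoly_wmul_mem _), ?_⟩
    have : sigpoly k n ^ i - (X : Polynomial k) ^ i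
        = wpoly k n * (a * h) + wpoly k m * (b * h) := by
      rw [hh, hab]; ring
    linear_combination this
  induction v using Polynomial.induction_on' with
  | add p q hp hq => exact add_mem (hp trivial) (hq trivial)
  | monomial i c =>
      rw [← smul_X_eq_monomial]
      exact Submodule.smul_mem _ c (hpow i)

lemma X_not_mem_Vpoly {n : ℕ} (hn : 1 < n) : (X : Polynomial k) ∉ Vpoly k n := by
  intro hX
  rw [mem_Vpoly] at hX
  have hq1 : 1 < Fintype.card k := Fintype.one_lt_card
  have hXq : (X : Polynomial k) ^ Fintype.card k - X = wpoly k 1 := by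
    rw [wpoly, pow_one]
  rw [hXq] at hX
  have hcoeff1 : (wpoly k 1).coeff (Fintype.card k) = 1 := by
    rw [wpoly, pow_one, coeff_sub, coeff_X_pow, if_pos rfl,
      coeff_X_of_ne_one (by omega), sub_zero]
  have hw1ne : wpoly k 1 ≠ 0 := fun h => by simp [h] at hcoeff1
  have hub : (wpoly k 1).natDegree ≤ Fintype.card k := by
    rw [wpoly, pow_one]
    refine (natDegree_sub_le _ _).trans ?_
    simp [natDegree_X_pow, natDegree_X]
    omega
  have hcoeffn : (wpoly k n).coeff (Fintype.card k ^ n) = 1 := by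
    have h1n : 1 < Fintype.card k ^ n := by
      calc 1 < Fintype.card k := hq1
      _ = Fintype.card k ^ 1 := (pow_one _).symm
      _ ≤ Fintype.card k ^ n := Nat.pow_le_pow_right (by omega) (by omega)
    rw [wpoly, coeff_sub, coeff_X_pow, if_pos rfl, coeff_X_of_ne_one (by omega), sub_zero]
  have hlb : Fintype.card k ^ n ≤ (wpoly k n).natDegree :=
    le_natDegree_of_ne_zero (by rw [hcoeffn]; exact one_ne_zero)
  have hle := (natDegree_le_of_dvd hX hw1ne)
  have : Fintype.card k ^ n ≤ Fintype.card k := le_trans hlb (le_trans hle hub)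
  have hlt : Fintype.card k ^ 1 < Fintype.card k ^ n := Nat.pow_lt_pow_right hq1 hn
  rw [pow_one] at hlt
  omega

/-- `Vpoly n` is closed under composition (substitution invariance). -/
lemma comp_mem_Vpoly {n : ℕ} {v : Polynomial k} (hv : v ∈ Vpoly k n) (g : Polynomial k) :
    v.comp g ∈ Vpoly k n := by
  rw [mem_Vpoly] at hv ⊢
  obtain ⟨h, hh⟩ := hv
  have hcomp : v.comp g ^ Fintype.card k - v.comp g
      = (wpoly k n).comp g * h.comp g := by
    rw [← mul_comp, ← hh, sub_comp, pow_comp]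
  rw [hcomp, wpoly, sub_comp, X_pow_comp, X_comp]
  exact Dvd.dvd.mul_right (wpoly_dvd n g) _

section Upstairs

variable {Y : Type*}

/-- The T-space of `k⟨Y⟩` spanned by all substitution instances of members of `Vpoly n`. -/
noncomputable def Vup (k : Type*) [Field k] [Fintype k] (Y : Type*) (n : ℕ) :
    Submodule k (FreeAlgebra k Y) :=
  Submodule.span k
    {y | ∃ v ∈ Vpoly k n, ∃ G : FreeAlgebra k Y, y = Polynomial.aeval G v}

lemma Vup_isTSpace (n : ℕ) : IsTSpaceF k Y (Vup k Y n) := by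
  intro φ v hv
  have hle : Vup k Y n ≤ (Vup k Y n).comap φ.toLinearMap := by
    rw [Vup, Submodule.span_le]
    rintro y ⟨v', hv', G, rfl⟩
    simp only [SetLike.mem_coe, Submodule.mem_comap, AlgHom.toLinearMap_apply]
    rw [← Polynomial.aeval_algHom_apply]
    exact Submodule.subset_span ⟨v', hv', φ G, rfl⟩
  exact hle hv

/-- The projection of `k⟨Y⟩` onto `k[X]` sending every generator to `X`. -/
noncomputable def Phi (k : Type*) [Field k] (Y : Type*) : FreeAlgebra k Y →ₐ[k] Polynomial k :=
  FreeAlgebra.lift k fun _ : Y => (Polynomial.X : Polynomial k)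

lemma Phi_mem (n : ℕ) {z : FreeAlgebra k Y} (hz : z ∈ Vup k Y n) :
    Phi k Y z ∈ Vpoly k n := by
  have hle : Vup k Y n ≤ (Vpoly k n).comap (Phi k Y).toLinearMap := by
    rw [Vup, Submodule.span_le]
    rintro y ⟨v', hv', G, rfl⟩
    simp only [SetLike.mem_coe, Submodule.mem_comap, AlgHom.toLinearMap_apply]
    rw [← Polynomial.aeval_algHom_apply, ← Polynomial.comp_eq_aeval]
    exact comp_mem_Vpoly hv' _
  exact hle hz

lemma ι_not_mem_Vup (n : ℕ) (hn : 1 < n) (y₀ : Y) :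
    FreeAlgebra.ι k y₀ ∉ Vup k Y n := by
  intro h
  have hmem := Phi_mem n h
  rw [Phi, FreeAlgebra.lift_ι_apply] at hmem
  exact X_not_mem_Vpoly hn hmem

lemma Vup_sup_eq_top {n m : ℕ} (hco : Nat.Coprime m n) (hn1 : 1 < n)
    (hnk : (n : k) ≠ 0) : Vup k Y n ⊔ Vup k Y m = ⊤ := by
  rw [eq_top_iff]
  intro z _
  have hX : (Polynomial.X : Polynomial k) ∈ Vpoly k n ⊔ Vpoly k m := by
    rw [Vpoly_sup_eq_top hco hn1 hnk]; trivial
  obtain ⟨va, hva, vb, hvb, hsum⟩ := Submodule.mem_sup.mp hX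
  have hz : z = Polynomial.aeval z va + Polynomial.aeval z vb := by
    rw [← map_add, hsum, Polynomial.aeval_X]
  rw [hz]
  exact Submodule.add_mem_sup (Submodule.subset_span ⟨va, hva, z, rfl⟩)
    (Submodule.subset_span ⟨vb, hvb, z, rfl⟩)

lemma tspace_eq_top_of_ι_mem {U : Submodule k (FreeAlgebra k Y)} (hU : IsTSpaceF k Y U)
    (y₀ : Y) (h : FreeAlgebra.ι k y₀ ∈ U) : U = ⊤ := by
  rw [eq_top_iff]
  intro z _
  have hz := hU (FreeAlgebra.lift k fun _ : Y => z) _ h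
  rwa [FreeAlgebra.lift_ι_apply] at hz

lemma exists_maximal_above (n : ℕ) (hn : 1 < n) (y₀ : Y) :
    ∃ M : Submodule k (FreeAlgebra k Y), IsTSpaceF k Y M ∧ Vup k Y n ≤ M ∧
      FreeAlgebra.ι k y₀ ∉ M ∧
      ∀ U : Submodule k (FreeAlgebra k Y), IsTSpaceF k Y U → FreeAlgebra.ι k y₀ ∉ U →
        M ≤ U → U = M := by
  set s : Set (Submodule k (FreeAlgebra k Y)) :=
    {V | IsTSpaceF k Y V ∧ FreeAlgebra.ι k y₀ ∉ V} with hs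
  have hVups : Vup k Y n ∈ s := ⟨Vup_isTSpace n, ι_not_mem_Vup n hn y₀⟩
  have hchain : ∀ c ⊆ s, IsChain (· ≤ ·) c → ∀ y ∈ c,
      ∃ ub ∈ s, ∀ z ∈ c, z ≤ ub := by
    intro c hcs hchain y hy
    refine ⟨sSup c, ⟨?_, ?_⟩, fun z hz => le_sSup hz⟩
    · intro φ v hv
      obtain ⟨W, hWc, hvW⟩ :=
        (Submodule.mem_sSup_of_directed ⟨y, hy⟩ hchain.directedOn).mp hv
      exact le_sSup hWc ((hcs hWc).1 φ v hvW)
    · intro hι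
      obtain ⟨W, hWc, hvW⟩ :=
        (Submodule.mem_sSup_of_directed ⟨y, hy⟩ hchain.directedOn).mp hι
      exact (hcs hWc).2 hvW
  obtain ⟨M, hleM, hMmax⟩ := zorn_le_nonempty₀ s hchain (Vup k Y n) hVups
  refine ⟨M, hMmax.1.1, hleM, hMmax.1.2, ?_⟩
  intro U hU hιU hMU
  exact le_antisymm (hMmax.2 ⟨hU, hιU⟩ hMU) hMU

end Upstairs

end MaxTSpaceAux

/-- If `k` is a finite field of characteristic `p > 2` and `X` is nonempty, then `k⟨X⟩`
has infinitely many maximal T-spaces. -/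
theorem infinitely_many_maximal_TSpacesF_odd (k : Type*) [Field k] [Fintype k] (p : ℕ)
    (hp : ringChar k = p) (hp2 : 2 < p) (X : Type*) [Nonempty X] :
    {V : Submodule k (FreeAlgebra k X) | IsTSpaceF k X V ∧ V ≠ ⊤ ∧
      ∀ U : Submodule k (FreeAlgebra k X), IsTSpaceF k X U → V ≤ U → U ≠ ⊤ →
        U = V}.Infinite := by
  classical
  obtain ⟨y₀⟩ := ‹Nonempty X›
  haveI : CharP k p := hp ▸ ringChar.charP k
  obtain ⟨f0, hpprime, hcard⟩ := FiniteField.card k p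
  set T : Set ℕ := {n | n.Prime} \ {p} with hT
  have hTinf : T.Infinite :=
    Nat.infinite_setOf_prime.diff (Set.finite_singleton p)
  haveI : Infinite ↥T := hTinf.to_subtype
  have hex : ∀ n : T,
      ∃ M : Submodule k (FreeAlgebra k X),
        (M ∈ {V : Submodule k (FreeAlgebra k X) | IsTSpaceF k X V ∧ V ≠ ⊤ ∧
          ∀ U : Submodule k (FreeAlgebra k X), IsTSpaceF k X U → V ≤ U → U ≠ ⊤ →
            U = V}) ∧ MaxTSpaceAux.Vup k X (n : ℕ) ≤ M := by
    rintro ⟨n, hnT⟩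
    have hnp : n.Prime := hnT.1
    have hn1 : 1 < n := hnp.one_lt
    obtain ⟨M, hTS, hle, hιM, hmax⟩ :=
      MaxTSpaceAux.exists_maximal_above (k := k) n hn1 y₀
    refine ⟨M, ⟨hTS, ?_, ?_⟩, hle⟩
    · intro hMtop
      rw [hMtop] at hιM
      exact hιM trivial
    · intro U hU hMU hUtop
      refine hmax U hU ?_ hMU
      intro hιU
      exact hUtop (MaxTSpaceAux.tspace_eq_top_of_ι_mem hU y₀ hιU)
  choose M hM hMle using hex
  refine Set.infinite_of_injective_forall_mem (f := M) ?_ hM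
  intro a b hab
  by_contra hne
  have hvalne : (a : ℕ) ≠ (b : ℕ) := fun h => hne (Subtype.ext h)
  have hap : (a : ℕ).Prime := a.2.1
  have hbp : (b : ℕ).Prime := b.2.1
  have hco : Nat.Coprime (b : ℕ) (a : ℕ) :=
    (Nat.coprime_primes hbp hap).mpr fun h => hvalne h.symm
  have ha1 : 1 < (a : ℕ) := hap.one_lt
  have hak : ((a : ℕ) : k) ≠ 0 := by
    intro h0
    have hdvd : p ∣ (a : ℕ) := (CharP.cast_eq_zero_iff k p (a : ℕ)).mp h0
    have : p = (a : ℕ) := (Nat.prime_dvd_prime_iff_eq hpprime hap).mp hdvd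
    exact a.2.2 (by simpa using this.symm)
  have hsup : MaxTSpaceAux.Vup k X (a : ℕ) ⊔ MaxTSpaceAux.Vup k X (b : ℕ) = ⊤ :=
    MaxTSpaceAux.Vup_sup_eq_top hco ha1 hak
  have htop : M a = ⊤ := by
    rw [eq_top_iff, ← hsup]
    exact sup_le (hMle a) (hab ▸ hMle b)
  exact (hM a).2.1 htop
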